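/- arXiv:1909.04298 — 2 statements merged into one kernel-verified Lean document; each statement's English description precedes it below -/
import Mathlib

section
/- The weight of the topological space (X,τ) (the smallest cardinality of a base of τ) equals λ. -/
universe u v

open Ordinal Set Topology Cardinal

namespace LawsonExample

def Xset (lam : Cardinal.{u}) : Set (Ordinal.{u} → Fin 3) :=
  {x | (∀ γ : Ordinal.{u}, lam.ord ≤ γ → x γ = 2) ∧ {γ : Ordinal.{u} | x γ ≠ 2}.Finite}

noncomputable def nrm (x : Ordinal.{u} → Fin 3) : Ordinal.{u} :=
  sInf {α | ∀ γ, α ≤ γ → x γ = 2}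

noncomputable def Vnbhd (lam : Cardinal.{u}) (x : ↥(Xset lam)) (α : Ordinal.{u}) :
    Set ↥(Xset lam) :=
  if x.1 0 = 2 then {x}
  else if x.1 0 = 1 then
    {y | (∀ γ, 1 ≤ γ → γ < α → y.1 γ = x.1 γ) ∧
         (∀ γ, α ≤ γ → γ < lam.ord → y.1 γ ≠ 1) ∧
         (y.1 0 = 1 ∨ (y.1 0 = 2 ∧ α < nrm y.1))}
  else
    {y | (∀ γ, 1 ≤ γ → γ < α → y.1 γ = x.1 γ) ∧
         (y.1 0 = 0 ∨ (y.1 0 = 2 ∧ α < nrm y.1 ∧ y.1 (Ordinal.pred (nrm y.1)) = 1))}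

def tauSet (lam : Cardinal.{u}) : Set (Set ↥(Xset lam)) :=
  {U | ∀ x ∈ U, ∃ α : Ordinal.{u}, nrm x.1 ≤ α ∧ α < lam.ord ∧ Vnbhd lam x α ⊆ U}

lemma nrm_spec {lam : Cardinal.{u}} (x : ↥(Xset lam)) {γ : Ordinal.{u}}
    (h : nrm x.1 ≤ γ) : x.1 γ = 2 := by
  have hne : {α : Ordinal.{u} | ∀ γ, α ≤ γ → x.1 γ = 2}.Nonempty :=
    ⟨lam.ord, fun γ hγ => x.2.1 γ hγ⟩
  exact csInf_mem hne γ h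

lemma nrm_lt {lam : Cardinal.{u}} (hlam : ℵ₀ ≤ lam) (x : ↥(Xset lam)) :
    nrm x.1 < lam.ord := by
  have hlim : Order.IsSuccLimit lam.ord := Cardinal.isSuccLimit_ord hlam
  rcases eq_empty_or_nonempty {γ | x.1 γ ≠ 2} with he | hne
  · have h0 : nrm x.1 ≤ 0 := csInf_le' (fun γ _ => by
      by_contra hc
      exact (eq_empty_iff_forall_notMem.1 he γ) hc)
    exact lt_of_le_of_lt h0 hlim.pos
  · set m := sSup {γ | x.1 γ ≠ 2} with hm_def
    have hmem : m ∈ {γ | x.1 γ ≠ 2} := hne.csSup_mem x.2.2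
    have hm : m < lam.ord := lt_of_not_ge fun h => hmem (x.2.1 m h)
    have hb : nrm x.1 ≤ m + 1 := csInf_le' (fun γ hγ => by
      by_contra hc
      have hle : γ ≤ m := le_csSup x.2.2.bddAbove hc
      rw [Ordinal.add_one_eq_succ] at hγ
      exact absurd hγ (not_le.2 (lt_of_le_of_lt hle (Order.lt_succ m))))
    have : m + 1 < lam.ord := by
      rw [Ordinal.add_one_eq_succ]; exact hlim.succ_lt hm
    exact lt_of_le_of_lt hb this

lemma fin3_cases (a : Fin 3) : a = 0 ∨ a = 1 ∨ a = 2 := by revert a; decide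

lemma mem_Vnbhd_self {lam : Cardinal.{u}} (x : ↥(Xset lam)) {α : Ordinal.{u}}
    (h : nrm x.1 ≤ α) : x ∈ Vnbhd lam x α := by
  rcases fin3_cases (x.1 0) with h0 | h0 | h0
  · have h2 : x.1 0 ≠ 2 := by rw [h0]; decide
    have h1 : x.1 0 ≠ 1 := by rw [h0]; decide
    rw [Vnbhd, if_neg h2, if_neg h1]
    exact ⟨fun γ _ _ => rfl, Or.inl h0⟩
  · have h2 : x.1 0 ≠ 2 := by rw [h0]; decide
    rw [Vnbhd, if_neg h2, if_pos h0]
    refine ⟨fun γ _ _ => rfl, fun γ hγ _ => ?_, Or.inl h0⟩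
    rw [nrm_spec x (le_trans h hγ)]; decide
  · rw [Vnbhd, if_pos h0]; exact rfl

lemma Vnbhd_mono {lam : Cardinal.{u}} (x : ↥(Xset lam)) {α β : Ordinal.{u}}
    (hα : nrm x.1 ≤ α) (hαβ : α ≤ β) : Vnbhd lam x β ⊆ Vnbhd lam x α := by
  rcases fin3_cases (x.1 0) with h0 | h0 | h0
  · have h2 : x.1 0 ≠ 2 := by rw [h0]; decide
    have h1 : x.1 0 ≠ 1 := by rw [h0]; decide
    rw [Vnbhd, Vnbhd, if_neg h2, if_neg h1, if_neg h2, if_neg h1]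
    rintro y ⟨hr, hy⟩
    refine ⟨fun γ h1γ h2γ => hr γ h1γ (lt_of_lt_of_le h2γ hαβ), ?_⟩
    rcases hy with hy | ⟨hy2, hylt, hyp⟩
    · exact Or.inl hy
    · exact Or.inr ⟨hy2, lt_of_le_of_lt hαβ hylt, hyp⟩
  · have h2 : x.1 0 ≠ 2 := by rw [h0]; decide
    rw [Vnbhd, Vnbhd, if_neg h2, if_pos h0, if_neg h2, if_pos h0]
    rintro y ⟨hr, hns, hy⟩
    have hα1 : 1 ≤ α := by
      by_contra hc
      have : α = 0 := Ordinal.lt_one_iff_zero.1 (not_le.1 hc)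
      have : x.1 0 = 2 := nrm_spec x (by rw [← this]; exact hα)
      exact h2 this
    refine ⟨fun γ h1γ h2γ => hr γ h1γ (lt_of_lt_of_le h2γ hαβ), ?_, ?_⟩
    · intro γ hγ hγlt
      by_cases hγβ : β ≤ γ
      · exact hns γ hγβ hγlt
      · have h1γ : 1 ≤ γ := le_trans hα1 hγ
        rw [hr γ h1γ (not_le.1 hγβ)]
        rw [nrm_spec x (le_trans hα hγ)]
        decide
    · rcases hy with hy | ⟨hy2, hylt⟩
      · exact Or.inl hy
      · exact Or.inr ⟨hy2, lt_of_le_of_lt hαβ hylt⟩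
  · rw [Vnbhd, Vnbhd, if_pos h0, if_pos h0]

noncomputable def tau (lam : Cardinal.{u}) (hlam : ℵ₀ ≤ lam) :
    TopologicalSpace ↥(Xset lam) where
  IsOpen U := U ∈ tauSet lam
  isOpen_univ := fun x _ =>
    ⟨nrm x.1, le_rfl, nrm_lt hlam x, subset_univ _⟩
  isOpen_inter := by
    intro U V hU hV x hx
    obtain ⟨α, hα1, hα2, hα3⟩ := hU x hx.1
    obtain ⟨β, hβ1, hβ2, hβ3⟩ := hV x hx.2
    refine ⟨max α β, le_trans hα1 (le_max_left _ _), max_lt hα2 hβ2, fun y hy => ?_⟩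
    exact ⟨hα3 (Vnbhd_mono x hα1 (le_max_left _ _) hy),
           hβ3 (Vnbhd_mono x hβ1 (le_max_right _ _) hy)⟩
  isOpen_sUnion := by
    intro S hS x hx
    obtain ⟨U, hU, hxU⟩ := hx
    obtain ⟨α, hα1, hα2, hα3⟩ := hS U hU x hxU
    exact ⟨α, hα1, hα2, fun y hy => ⟨U, hU, hα3 hy⟩⟩


/-- The semilattice operation of `X`: pointwise minimum. -/
noncomputable def pmin (lam : Cardinal.{u}) (x y : ↥(Xset lam)) : ↥(Xset lam) :=
  ⟨fun γ => min (x.1 γ) (y.1 γ), by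
    constructor
    · intro γ hγ
      show min (x.1 γ) (y.1 γ) = 2
      rw [x.2.1 γ hγ, y.2.1 γ hγ, min_self]
    · refine (x.2.2.union y.2.2).subset fun γ hγ => ?_
      have hγ' : min (x.1 γ) (y.1 γ) ≠ 2 := hγ
      simp only [mem_union, mem_setOf_eq]
      by_contra hc
      push_neg at hc
      rw [hc.1, hc.2, min_self] at hγ'
      exact hγ' rfl⟩

/-- `B` is a base of the topology `t`: it consists of open sets, and every open set is a
union of members of `B`. -/
def IsBase {X : Type v} (t : TopologicalSpace X) (B : Set (Set X)) : Prop :=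
  (∀ U ∈ B, IsOpen[t] U) ∧ ∀ U, IsOpen[t] U → ∃ S ⊆ B, U = ⋃₀ S

/-- The family `ℬ = {V_α(x) : x ∈ X, α ∈ [‖x‖, λ)}`. -/
def Vfamily (lam : Cardinal.{u}) : Set (Set ↥(Xset lam)) :=
  {W | ∃ (x : ↥(Xset lam)) (α : Ordinal.{u}), nrm x.1 ≤ α ∧ α < lam.ord ∧ W = Vnbhd lam x α}

/-- The weight of a topological space: the smallest cardinality of a base of its topology. -/
noncomputable def weight {X : Type v} (t : TopologicalSpace X) : Cardinal.{v} :=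
  sInf {c : Cardinal.{v} | ∃ B : Set (Set X), IsBase t B ∧ c = Cardinal.mk ↥B}

/-- The function `𝟎_β`, with `𝟎_β β = 0` and `𝟎_β γ = 2` for `γ ≠ β`. -/
noncomputable def zeroF (β : Ordinal.{u}) : Ordinal.{u} → Fin 3 :=
  fun γ => if γ = β then 0 else 2

/-- The function `𝟏_β`, with `𝟏_β β = 1` and `𝟏_β γ = 2` for `γ ≠ β`. -/
noncomputable def oneF (β : Ordinal.{u}) : Ordinal.{u} → Fin 3 :=
  fun γ => if γ = β then 1 else 2

lemma zeroF_mem (lam : Cardinal.{u}) {β : Ordinal.{u}} (h : β < lam.ord) :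
    zeroF β ∈ Xset lam := by
  constructor
  · intro γ hγ
    have hne : γ ≠ β := fun e => absurd h (not_lt.2 (e ▸ hγ))
    simp [zeroF, hne]
  · refine (finite_singleton β).subset fun γ hγ => ?_
    simp only [mem_setOf_eq, zeroF] at hγ
    by_contra hc
    simp only [mem_singleton_iff] at hc
    rw [if_neg hc] at hγ
    exact hγ rfl

lemma oneF_mem (lam : Cardinal.{u}) {β : Ordinal.{u}} (h : β < lam.ord) :
    oneF β ∈ Xset lam := by
  constructor
  · intro γ hγ
    have hne : γ ≠ β := fun e => absurd h (not_lt.2 (e ▸ hγ))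
    simp [oneF, hne]
  · refine (finite_singleton β).subset fun γ hγ => ?_
    simp only [mem_setOf_eq, oneF] at hγ
    by_contra hc
    simp only [mem_singleton_iff] at hc
    rw [if_neg hc] at hγ
    exact hγ rfl

/-- `𝟎_β` as an element of `X` (for `β < λ`). -/
noncomputable def zeroE (lam : Cardinal.{u}) {β : Ordinal.{u}} (h : β < lam.ord) :
    ↥(Xset lam) := ⟨zeroF β, zeroF_mem lam h⟩

/-- `𝟏_β` as an element of `X` (for `β < λ`). -/
noncomputable def oneE (lam : Cardinal.{u}) {β : Ordinal.{u}} (h : β < lam.ord) :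
    ↥(Xset lam) := ⟨oneF β, oneF_mem lam h⟩


lemma nrm_pos_of_ne {lam : Cardinal.{u}} (x : ↥(Xset lam)) (h : x.1 0 ≠ 2) :
    1 ≤ nrm x.1 := by
  rw [Order.one_le_iff_pos]
  by_contra hc
  have h0 : nrm x.1 ≤ 0 := le_of_not_gt (by simpa using hc)
  exact h (nrm_spec x h0)

lemma Vnbhd_step {lam : Cardinal.{u}} (x y : ↥(Xset lam)) {α : Ordinal.{u}}
    (hα : nrm x.1 ≤ α) (hy : y ∈ Vnbhd lam x α) :
    Vnbhd lam y (max α (nrm y.1)) ⊆ Vnbhd lam x α := by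
  set β := max α (nrm y.1) with hβ
  have hαβ : α ≤ β := le_max_left _ _
  by_cases hy2 : y.1 0 = 2
  · rw [Vnbhd, if_pos hy2]
    intro z hz
    rw [mem_singleton_iff] at hz
    subst hz; exact hy
  · rcases fin3_cases (x.1 0) with h0 | h0 | h0
    · have hx2 : x.1 0 ≠ 2 := by rw [h0]; decide
      have hx1 : x.1 0 ≠ 1 := by rw [h0]; decide
      rw [Vnbhd, if_neg hx2, if_neg hx1] at hy
      obtain ⟨hr, hd⟩ := hy
      have hy0 : y.1 0 = 0 := by
        rcases hd with hd | ⟨hd, _⟩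
        · exact hd
        · exact absurd hd hy2
      have hy1 : y.1 0 ≠ 1 := by rw [hy0]; decide
      rw [Vnbhd, if_neg hy2, if_neg hy1, Vnbhd, if_neg hx2, if_neg hx1]
      rintro z ⟨zr, zd⟩
      refine ⟨fun γ h1 h2 => by
        rw [zr γ h1 (lt_of_lt_of_le h2 hαβ)]; exact hr γ h1 h2, ?_⟩
      rcases zd with zd | ⟨z2, zlt, zp⟩
      · exact Or.inl zd
      · exact Or.inr ⟨z2, lt_of_le_of_lt hαβ zlt, zp⟩
    · have hx2 : x.1 0 ≠ 2 := by rw [h0]; decide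
      rw [Vnbhd, if_neg hx2, if_pos h0] at hy
      obtain ⟨hr, hns, hd⟩ := hy
      have hy1 : y.1 0 = 1 := by
        rcases hd with hd | ⟨hd, _⟩
        · exact hd
        · exact absurd hd hy2
      have hα1 : 1 ≤ α := le_trans (nrm_pos_of_ne x hx2) hα
      rw [Vnbhd, if_neg hy2, if_pos hy1, Vnbhd, if_neg hx2, if_pos h0]
      rintro z ⟨zr, zns, zd⟩
      refine ⟨fun γ h1 h2 => by
        rw [zr γ h1 (lt_of_lt_of_le h2 hαβ)]; exact hr γ h1 h2, ?_, ?_⟩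
      · intro γ hγ hγlt
        by_cases hγβ : β ≤ γ
        · exact zns γ hγβ hγlt
        · have h1γ : 1 ≤ γ := le_trans hα1 hγ
          rw [zr γ h1γ (not_le.1 hγβ)]
          exact hns γ hγ hγlt
      · rcases zd with zd | ⟨z2, zlt⟩
        · exact Or.inl zd
        · exact Or.inr ⟨z2, lt_of_le_of_lt hαβ zlt⟩
    · rw [Vnbhd, if_pos h0] at hy
      rw [mem_singleton_iff] at hy
      subst hy
      exact absurd h0 hy2

lemma Vnbhd_mem_tauSet {lam : Cardinal.{u}} (hlam : ℵ₀ ≤ lam) (x : ↥(Xset lam))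
    {α : Ordinal.{u}} (hα : nrm x.1 ≤ α) (hα2 : α < lam.ord) :
    Vnbhd lam x α ∈ tauSet lam := by
  intro y hy
  exact ⟨max α (nrm y.1), le_max_right _ _, max_lt hα2 (nrm_lt hlam y),
    Vnbhd_step x y hα hy⟩

lemma Vfamily_isBase (lam : Cardinal.{u}) (hlam : ℵ₀ ≤ lam) :
    IsBase (tau lam hlam) (Vfamily lam) := by
  constructor
  · rintro U ⟨x, α, hα1, hα2, rfl⟩
    exact Vnbhd_mem_tauSet hlam x hα1 hα2
  · intro U hU
    refine ⟨{W | W ∈ Vfamily lam ∧ W ⊆ U}, fun W hW => hW.1, ?_⟩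
    ext x
    constructor
    · intro hx
      obtain ⟨α, hα1, hα2, hα3⟩ := hU x hx
      exact ⟨Vnbhd lam x α, ⟨⟨x, α, hα1, hα2, rfl⟩, hα3⟩, mem_Vnbhd_self x hα1⟩
    · rintro ⟨W, ⟨_, hWU⟩, hxW⟩
      exact hWU hxW

lemma mk_Iio_ord (lam : Cardinal.{u}) :
    #(Iio lam.ord) = Cardinal.lift.{u + 1} lam := by
  rw [Ordinal.mk_Iio_ordinal, Cardinal.card_ord]

lemma mk_Xset_le (lam : Cardinal.{u}) (hlam : ℵ₀ ≤ lam) :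
    #(↥(Xset lam)) ≤ Cardinal.lift.{u + 1} lam := by
  have hinf : Infinite (Iio lam.ord) := by
    rw [Cardinal.infinite_iff, mk_Iio_ord]
    exact le_trans (by simpa using hlam) le_rfl
  have key : ∀ a : Fin 3, ((2 : Fin 3) - a = 0 ↔ a = 2) := by decide
  have hF : Function.Injective (fun x : ↥(Xset lam) =>
      Finsupp.ofSupportFinite (fun γ : Iio lam.ord => (2 : Fin 3) - x.1 γ.1)
        (by
          refine ((x.2.2.preimage (Subtype.val_injective.injOn)).subset ?_)
          intro γ hγ
          simp only [Function.mem_support] at hγ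
          simp only [mem_preimage, mem_setOf_eq]
          intro hc
          exact hγ ((key _).2 hc))) := by
    intro x y hxy
    apply Subtype.ext
    funext γ
    by_cases hγ : γ < lam.ord
    · have h2 : (2 : Fin 3) - x.1 γ = 2 - y.1 γ :=
        DFunLike.congr_fun hxy (⟨γ, hγ⟩ : Iio lam.ord)
      have hsub : ∀ a b : Fin 3, (2 : Fin 3) - a = 2 - b → a = b := by decide
      exact hsub _ _ h2
    · rw [x.2.1 γ (le_of_not_gt hγ), y.2.1 γ (le_of_not_gt hγ)]
  calc #(↥(Xset lam)) ≤ #(Iio lam.ord →₀ Fin 3) := Cardinal.mk_le_of_injective hF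
    _ = max (Cardinal.lift.{0} #(Iio lam.ord)) (Cardinal.lift.{u+1} #(Fin 3)) :=
        Cardinal.mk_finsupp_lift_of_infinite _ _
    _ ≤ Cardinal.lift.{u + 1} lam := by
        rw [Cardinal.lift_id', mk_Iio_ord]
        apply max_le le_rfl
        refine le_trans ?_ (by simpa using hlam : ℵ₀ ≤ Cardinal.lift.{u+1} lam)
        simp [Cardinal.mk_fintype]

lemma mk_Vfamily_le (lam : Cardinal.{u}) (hlam : ℵ₀ ≤ lam) :
    #(↥(Vfamily lam)) ≤ Cardinal.lift.{u + 1} lam := by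
  have hsub : Vfamily lam ⊆
      range (fun p : ↥(Xset lam) × ↥(Iio lam.ord) => Vnbhd lam p.1 p.2.1) := by
    rintro W ⟨x, α, hα1, hα2, rfl⟩
    exact ⟨(x, ⟨α, hα2⟩), rfl⟩
  calc #(↥(Vfamily lam)) ≤ #(↥(range (fun p : ↥(Xset lam) × ↥(Iio lam.ord) =>
        Vnbhd lam p.1 p.2.1))) := Cardinal.mk_le_mk_of_subset hsub
    _ ≤ #(↥(Xset lam) × ↥(Iio lam.ord)) := Cardinal.mk_range_le
    _ = #(↥(Xset lam)) * #(↥(Iio lam.ord)) := by rw [Cardinal.mk_prod, Cardinal.lift_id, Cardinal.lift_id]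
    _ ≤ Cardinal.lift.{u+1} lam * Cardinal.lift.{u+1} lam := by
        apply mul_le_mul' (mk_Xset_le lam hlam) (le_of_eq (mk_Iio_ord lam))
    _ = Cardinal.lift.{u+1} lam := Cardinal.mul_eq_self (by simpa using hlam)

lemma singleton_mem_base {lam : Cardinal.{u}} {hlam : ℵ₀ ≤ lam}
    {B : Set (Set ↥(Xset lam))} (hB : IsBase (tau lam hlam) B)
    {x : ↥(Xset lam)} (hx : IsOpen[tau lam hlam] {x}) : {x} ∈ B := by
  obtain ⟨S, hSB, hS⟩ := hB.2 _ hx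
  have hxS : x ∈ ⋃₀ S := by rw [← hS]; exact rfl
  obtain ⟨W, hWS, hxW⟩ := hxS
  have hWx : W ⊆ {x} := by rw [hS]; exact subset_sUnion_of_mem hWS
  have : W = {x} := le_antisymm hWx (singleton_subset_iff.2 hxW)
  exact this ▸ hSB hWS

lemma oneE_zero_eq_two {lam : Cardinal.{u}} {β : Ordinal.{u}} (h : β + 1 < lam.ord) :
    (oneE lam h).1 0 = 2 := by
  show oneF (β + 1) 0 = 2
  rw [oneF, if_neg]
  intro hc
  rw [Ordinal.add_one_eq_succ] at hc
  exact (Order.succ_ne_bot β) hc.symm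

lemma singleton_oneE_open {lam : Cardinal.{u}} (hlam : ℵ₀ ≤ lam) {β : Ordinal.{u}}
    (h : β + 1 < lam.ord) : IsOpen[tau lam hlam] {oneE lam h} := by
  intro y hy
  rw [mem_singleton_iff] at hy
  subst hy
  refine ⟨nrm (oneE lam h).1, le_rfl, nrm_lt hlam _, ?_⟩
  rw [Vnbhd, if_pos (oneE_zero_eq_two h)]


/-- **Claim 4.** The weight of the topological space `(X, τ)` — the smallest
cardinality of a base of `τ` — equals `λ`. -/
theorem weight_tau (lam : Cardinal.{u}) (hlam : ℵ₀ ≤ lam) :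
    weight (tau lam hlam) = Cardinal.lift.{u + 1} lam := by
  have hbase := Vfamily_isBase lam hlam
  apply le_antisymm
  · exact le_trans (csInf_le' ⟨Vfamily lam, hbase, rfl⟩) (mk_Vfamily_le lam hlam)
  · refine le_csInf ⟨#(↥(Vfamily lam)), Vfamily lam, hbase, rfl⟩ ?_
    rintro c ⟨B, hB, rfl⟩
    have hlim : Order.IsSuccLimit lam.ord := Cardinal.isSuccLimit_ord hlam
    have hj : ∀ β : ↥(Iio lam.ord), β.1 + 1 < lam.ord := fun β => by
      rw [Ordinal.add_one_eq_succ]; exact hlim.succ_lt β.2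
    have hinj : Function.Injective (fun β : ↥(Iio lam.ord) =>
        (⟨{oneE lam (hj β)}, singleton_mem_base hB (singleton_oneE_open hlam (hj β))⟩ :
          ↥B)) := by
      intro β β' hββ'
      have h1 : ({oneE lam (hj β)} : Set ↥(Xset lam)) = {oneE lam (hj β')} :=
        congrArg Subtype.val hββ'
      rw [singleton_eq_singleton_iff] at h1
      have h2 : oneF (β.1 + 1) = oneF (β'.1 + 1) := congrArg Subtype.val h1
      have h3 := congrFun h2 (β.1 + 1)
      rw [oneF, oneF, if_pos rfl] at h3
      by_cases hc : β.1 + 1 = β'.1 + 1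
      · rw [Ordinal.add_one_eq_succ, Ordinal.add_one_eq_succ] at hc
        exact Subtype.ext (Order.succ_eq_succ_iff.1 hc)
      · rw [if_neg hc] at h3
        exact absurd h3 (by decide)
    calc Cardinal.lift.{u+1} lam = #(Iio lam.ord) := (mk_Iio_ord lam).symm
      _ ≤ #(↥B) := Cardinal.mk_le_of_injective hinj


end LawsonExample
end

section
/- The topological space (X,τ) is Hausdorff: any two distinct points of X have disjoint open neighborhoods. -/
universe u v

open Ordinal Set Topology Cardinal

namespace LawsonExample

lemma le_pred_of_lt' {α o : Ordinal.{u}} (h : α < o) : α ≤ Ordinal.pred o := by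
  by_cases hs : ∃ b, o = Order.succ b
  · obtain ⟨b, hb⟩ := hs
    rw [hb, Ordinal.pred_succ]
    exact Order.lt_succ_iff.1 (hb ▸ h)
  · rw [Ordinal.pred_eq_of_isSuccPrelimit (fun b hb => hs ⟨b, hb.succ_eq.symm⟩)]
    exact h.le

lemma Vnbhd_sub {lam : Cardinal.{u}} (x z : ↥(Xset lam)) {α : Ordinal.{u}}
    (hα : nrm x.1 ≤ α) (hz : z ∈ Vnbhd lam x α) :
    Vnbhd lam z (max α (nrm z.1)) ⊆ Vnbhd lam x α := by
  by_cases hz2 : z.1 0 = 2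
  · rw [Vnbhd, if_pos hz2]
    intro w hw
    rw [mem_singleton_iff] at hw
    rw [hw]; exact hz
  rcases fin3_cases (x.1 0) with h0 | h0 | h0
  · have hx2 : x.1 0 ≠ 2 := by rw [h0]; decide
    have hx1 : x.1 0 ≠ 1 := by rw [h0]; decide
    rw [Vnbhd, if_neg hx2, if_neg hx1] at hz
    obtain ⟨hr, hc⟩ := hz
    have hz0 : z.1 0 = 0 := by
      rcases hc with h | ⟨h, _⟩
      · exact h
      · exact absurd h hz2
    have hz1 : z.1 0 ≠ 1 := by rw [hz0]; decide
    intro w hw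
    rw [Vnbhd, if_neg hz2, if_neg hz1] at hw
    obtain ⟨hwr, hwc⟩ := hw
    rw [Vnbhd, if_neg hx2, if_neg hx1]
    refine ⟨fun γ h1 h2 => by
      rw [hwr γ h1 (lt_of_lt_of_le h2 (le_max_left _ _)), hr γ h1 h2], ?_⟩
    rcases hwc with h | ⟨a, b, c⟩
    · exact Or.inl h
    · exact Or.inr ⟨a, lt_of_le_of_lt (le_max_left _ _) b, c⟩
  · have hx2 : x.1 0 ≠ 2 := by rw [h0]; decide
    rw [Vnbhd, if_neg hx2, if_pos h0] at hz
    obtain ⟨hr, hns, hc⟩ := hz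
    have hz1 : z.1 0 = 1 := by
      rcases hc with h | ⟨h, _⟩
      · exact h
      · exact absurd h hz2
    have hα1 : 1 ≤ α := by
      by_contra hcon
      have h00 : α = 0 := Ordinal.lt_one_iff_zero.1 (not_le.1 hcon)
      exact hx2 (nrm_spec x (by rw [← h00]; exact hα))
    intro w hw
    rw [Vnbhd, if_neg hz2, if_pos hz1] at hw
    obtain ⟨hwr, hwns, hwc⟩ := hw
    rw [Vnbhd, if_neg hx2, if_pos h0]
    refine ⟨fun γ h1 h2 => by
      rw [hwr γ h1 (lt_of_lt_of_le h2 (le_max_left _ _)), hr γ h1 h2], ?_, ?_⟩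
    · intro γ hγ hγl
      by_cases hb : max α (nrm z.1) ≤ γ
      · exact hwns γ hb hγl
      · have h1γ : 1 ≤ γ := le_trans hα1 hγ
        rw [hwr γ h1γ (not_le.1 hb)]
        exact hns γ hγ hγl
    · rcases hwc with h | ⟨a, b⟩
      · exact Or.inl h
      · exact Or.inr ⟨a, lt_of_le_of_lt (le_max_left _ _) b⟩
  · rw [Vnbhd, if_pos h0, mem_singleton_iff] at hz
    exact absurd (hz ▸ h0 : z.1 0 = 2) hz2

lemma Vnbhd_open {lam : Cardinal.{u}} (hlam : ℵ₀ ≤ lam) (x : ↥(Xset lam)) {α : Ordinal.{u}}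
    (hα : nrm x.1 ≤ α) (hαl : α < lam.ord) : Vnbhd lam x α ∈ tauSet lam := fun z hz =>
  ⟨max α (nrm z.1), le_max_right _ _, max_lt hαl (nrm_lt hlam z), Vnbhd_sub x z hα hz⟩

lemma disj01 {lam : Cardinal.{u}} (hlam : ℵ₀ ≤ lam) (x y z : ↥(Xset lam)) {α : Ordinal.{u}}
    (hx0 : x.1 0 = 0) (hy0 : y.1 0 = 1)
    (hzx : z ∈ Vnbhd lam x α) (hzy : z ∈ Vnbhd lam y α) : False := by
  have hx2 : x.1 0 ≠ 2 := by rw [hx0]; decide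
  have hx1 : x.1 0 ≠ 1 := by rw [hx0]; decide
  have hy2 : y.1 0 ≠ 2 := by rw [hy0]; decide
  rw [Vnbhd, if_neg hx2, if_neg hx1] at hzx
  rw [Vnbhd, if_neg hy2, if_pos hy0] at hzy
  obtain ⟨_, hc0⟩ := hzx
  obtain ⟨_, hns, hc1⟩ := hzy
  have hz2 : z.1 0 = 2 ∧ α < nrm z.1 ∧ z.1 (Ordinal.pred (nrm z.1)) = 1 := by
    rcases hc0 with h | h
    · rcases hc1 with h1 | ⟨h1, _⟩ <;> rw [h] at h1 <;> exact absurd h1 (by decide)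
    · exact h
  obtain ⟨_, hlt, hp⟩ := hz2
  have h1 : α ≤ Ordinal.pred (nrm z.1) := le_pred_of_lt' hlt
  have h2 : Ordinal.pred (nrm z.1) < lam.ord :=
    lt_of_le_of_lt (Ordinal.pred_le_self _) (nrm_lt hlam z)
  exact hns _ h1 h2 hp

lemma disj_same {lam : Cardinal.{u}} (x y z : ↥(Xset lam)) {α : Ordinal.{u}}
    (hne : x ≠ y) (hαx : nrm x.1 ≤ α) (hαy : nrm y.1 ≤ α) (h00 : y.1 0 = x.1 0)
    (hagx : ∀ γ, 1 ≤ γ → γ < α → z.1 γ = x.1 γ)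
    (hagy : ∀ γ, 1 ≤ γ → γ < α → z.1 γ = y.1 γ) : False := by
  apply hne
  apply Subtype.ext
  funext γ
  by_cases hγα : γ < α
  · rcases eq_or_ne γ 0 with h | h
    · rw [h, h00]
    · rw [← hagx γ (Ordinal.one_le_iff_ne_zero.2 h) hγα,
        hagy γ (Ordinal.one_le_iff_ne_zero.2 h) hγα]
  · rw [nrm_spec x (le_trans hαx (not_lt.1 hγα)), nrm_spec y (le_trans hαy (not_lt.1 hγα))]

lemma disj_two {lam : Cardinal.{u}} (x y z : ↥(Xset lam)) {α : Ordinal.{u}}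
    (hαy : nrm y.1 ≤ α) (hx2 : x.1 0 ≠ 2) (hy0 : y.1 0 = 2)
    (hzx : z ∈ Vnbhd lam x α) (hzy : z ∈ Vnbhd lam y α) : False := by
  rw [Vnbhd, if_pos hy0, mem_singleton_iff] at hzy
  subst hzy
  rcases fin3_cases (x.1 0) with h | h | h
  · have h1 : x.1 0 ≠ 1 := by rw [h]; decide
    rw [Vnbhd, if_neg hx2, if_neg h1] at hzx
    rcases hzx.2 with hc | ⟨_, hlt, _⟩
    · rw [hy0] at hc; exact absurd hc (by decide)
    · exact absurd hlt (not_lt.2 hαy)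
  · rw [Vnbhd, if_neg hx2, if_pos h] at hzx
    rcases hzx.2.2 with hc | ⟨_, hlt⟩
    · rw [hy0] at hc; exact absurd hc (by decide)
    · exact absurd hlt (not_lt.2 hαy)
  · exact hx2 h

/-- The topological space `(X, τ)` is Hausdorff: any two distinct points of
`X` have disjoint open neighborhoods. -/
theorem t2Space_tau (lam : Cardinal.{u}) (hlam : ℵ₀ ≤ lam) :
    @T2Space ↥(Xset lam) (tau lam hlam) := by
  letI t := tau lam hlam
  refine ⟨fun x y hxy => ?_⟩
  set α := max (nrm x.1) (nrm y.1) with hαdef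
  have hαx : nrm x.1 ≤ α := le_max_left _ _
  have hαy : nrm y.1 ≤ α := le_max_right _ _
  have hαl : α < lam.ord := max_lt (nrm_lt hlam x) (nrm_lt hlam y)
  refine ⟨Vnbhd lam x α, Vnbhd lam y α, Vnbhd_open hlam x hαx hαl, Vnbhd_open hlam y hαy hαl,
    mem_Vnbhd_self x hαx, mem_Vnbhd_self y hαy, ?_⟩
  rw [Set.disjoint_left]
  intro z hzx hzy
  rcases fin3_cases (x.1 0) with hx0 | hx0 | hx0 <;>
    rcases fin3_cases (y.1 0) with hy0 | hy0 | hy0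
  · have hx2 : x.1 0 ≠ 2 := by rw [hx0]; decide
    have hx1 : x.1 0 ≠ 1 := by rw [hx0]; decide
    have hy2 : y.1 0 ≠ 2 := by rw [hy0]; decide
    have hy1 : y.1 0 ≠ 1 := by rw [hy0]; decide
    rw [Vnbhd, if_neg hx2, if_neg hx1] at hzx
    rw [Vnbhd, if_neg hy2, if_neg hy1] at hzy
    exact disj_same x y z hxy hαx hαy (hy0.trans hx0.symm) hzx.1 hzy.1
  · exact disj01 hlam x y z hx0 hy0 hzx hzy
  · exact disj_two x y z hαy (by rw [hx0]; decide) hy0 hzx hzy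
  · exact disj01 hlam y x z hy0 hx0 hzy hzx
  · have hx2 : x.1 0 ≠ 2 := by rw [hx0]; decide
    have hy2 : y.1 0 ≠ 2 := by rw [hy0]; decide
    rw [Vnbhd, if_neg hx2, if_pos hx0] at hzx
    rw [Vnbhd, if_neg hy2, if_pos hy0] at hzy
    exact disj_same x y z hxy hαx hαy (hy0.trans hx0.symm) hzx.1 hzy.1
  · exact disj_two x y z hαy (by rw [hx0]; decide) hy0 hzx hzy
  · exact disj_two y x z hαx (by rw [hy0]; decide) hx0 hzy hzx
  · exact disj_two y x z hαx (by rw [hy0]; decide) hx0 hzy hzx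
  · rw [Vnbhd, if_pos hx0, mem_singleton_iff] at hzx
    rw [Vnbhd, if_pos hy0, mem_singleton_iff] at hzy
    exact hxy (hzx ▸ hzy)

end LawsonExample
end
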